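/- Let R and S be reflexive digraphs such that #𝓗(G',R) ≤ #𝓗(G',S) for every digraph G'. Let G be a digraph, 𝓛 a set of subgraphs of G, and B := ⋃_{L ∈ 𝓛} A(L*). Then for every ξ ∈ 𝓜^𝓛(G,R): if the restriction of ι_ξ to B belongs to 𝓘^𝓛(G,S), then #𝓙^𝓛_{G,R}(ξ) ≤ #𝓙^𝓛_{G,S}(ξ). -/

import Mathlib

/-- A finite digraph: a finite nonempty vertex set `V ⊆ ℕ` together with an
arc set `A ⊆ V × V`. -/
structure Dgraph where
  V : Finset ℕ
  nonempty : V.Nonempty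
  A : Finset (ℕ × ℕ)
  A_sub : ∀ p ∈ A, p.1 ∈ V ∧ p.2 ∈ V

namespace Dgraph

/-- The set of proper arcs of `G`, i.e. the arc set of `G*`. -/
def Astar (G : Dgraph) : Finset (ℕ × ℕ) := G.A.filter (fun p => p.1 ≠ p.2)

/-- `G` is reflexive. -/
def IsRefl (G : Dgraph) : Prop := ∀ v ∈ G.V, (v, v) ∈ G.A

/-- `p` is a path in `G` (a nonempty list of pairwise distinct vertices,
consecutive ones joined by arcs).  Its length as a path is `p.length - 1`. -/
def IsPath (G : Dgraph) (p : List ℕ) : Prop :=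
  p ≠ [] ∧ p.Nodup ∧ (∀ v ∈ p, v ∈ G.V) ∧ p.Chain' (fun v w => (v, w) ∈ G.A)

/-- `p` is a path in `G*`. -/
def IsPathStar (G : Dgraph) (p : List ℕ) : Prop :=
  p ≠ [] ∧ p.Nodup ∧ (∀ v ∈ p, v ∈ G.V) ∧ p.Chain' (fun v w => (v, w) ∈ G.A ∧ v ≠ w)

/-- `G*` contains a closed walk. -/
def HasClosedWalkStar (G : Dgraph) : Prop :=
  ∃ p : List ℕ, (∀ v ∈ p, v ∈ G.V) ∧ p.Chain' (fun v w => (v, w) ∈ G.A ∧ v ≠ w) ∧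
    2 ≤ p.length ∧ p.head? = p.getLast?

/-- membership in the class `𝔗ₐ`: `G*` is acyclic. -/
def MemTa (G : Dgraph) : Prop := ¬ G.HasClosedWalkStar

/-- The height of `G`: the maximal length of a path in `G`. -/
noncomputable def height (G : Dgraph) : ℕ :=
  sSup {n | ∃ p, G.IsPath p ∧ p.length = n + 1}

/-- The interval `[v,w]_G`. -/
def interval (G : Dgraph) (v w : ℕ) : Finset ℕ :=
  G.V.filter (fun z => (v, z) ∈ G.A ∧ (z, w) ∈ G.A)

/-- `ι(v,w)_G`, the cardinality of the interval `[v,w]_G`. -/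
def iota (G : Dgraph) (v w : ℕ) : ℕ := (G.interval v w).card

/-- The set `𝓗(G,H)` of homomorphisms from `G` to `H` (represented as total
maps `ℕ → ℕ`, normalized to `0` outside of `V(G)`). -/
def Hom (G H : Dgraph) : Set (ℕ → ℕ) :=
  {f | (∀ v ∈ G.V, f v ∈ H.V) ∧ (∀ p ∈ G.A, (f p.1, f p.2) ∈ H.A) ∧
    ∀ v, v ∉ G.V → f v = 0}

/-- The set `𝓢(G,H)` of strict homomorphisms from `G` to `H`. -/
def SHom (G H : Dgraph) : Set (ℕ → ℕ) :=
  {f ∈ Hom G H | ∀ p ∈ G.Astar, f p.1 ≠ f p.2}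

/-- `μ_ξ(G)`, for a homomorphism `ξ` from `G` into `H`. -/
def mu (G H : Dgraph) (f : ℕ → ℕ) : ℕ :=
  ∑ p ∈ G.Astar, H.iota (f p.1) (f p.2)

/-- `L` is a subgraph of `G`. -/
def Subgraph (L G : Dgraph) : Prop := L.V ⊆ G.V ∧ L.A ⊆ G.A

/-- Restriction of a map to a vertex set (normalized to `0` outside). -/
def restrict (X : Finset ℕ) (f : ℕ → ℕ) : ℕ → ℕ := fun x => if x ∈ X then f x else 0

/-- `𝓜(L,H)`: homomorphisms from `L` to `H` with maximal `μ`. -/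
def MSet (L H : Dgraph) : Set (ℕ → ℕ) :=
  {f ∈ Hom L H | ∀ g ∈ Hom L H, mu L H g ≤ mu L H f}

/-- `𝓜^𝓛(G,H)`. -/
def MLSet (G H : Dgraph) (𝓛 : Set Dgraph) : Set (ℕ → ℕ) :=
  {f ∈ Hom G H | ∀ L ∈ 𝓛, restrict L.V f ∈ MSet L H}

/-- `𝓙^𝓛_{G,H'}(ξ)` for `ξ ∈ 𝓗(G,H)`. -/
def JSet (G H H' : Dgraph) (𝓛 : Set Dgraph) (ξ : ℕ → ℕ) : Set (ℕ → ℕ) :=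
  {ζ ∈ Hom G H' | ∀ L ∈ 𝓛, ∀ p ∈ L.Astar,
    H'.iota (ζ p.1) (ζ p.2) = H.iota (ξ p.1) (ξ p.2)}

/-- The digraph `P_×` of a path `P = P_0, …, P_ℓ`: vertex set `{P_0,…,P_ℓ}`
and arcs `P_{i-1}P_i`. -/
def pathGraph (P : List ℕ) (h : P ≠ []) : Dgraph where
  V := P.toFinset
  nonempty := by
    obtain ⟨a, t, rfl⟩ := List.exists_cons_of_ne_nil h
    exact ⟨a, by simp⟩
  A := (P.zip P.tail).toFinset
  A_sub := by
    intro p hp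
    rw [List.mem_toFinset] at hp
    have h1 := List.of_mem_zip hp
    exact ⟨List.mem_toFinset.mpr h1.1, List.mem_toFinset.mpr (List.mem_of_mem_tail h1.2)⟩

/-- `𝓛(G)`: the set of the digraphs `P_×` for the paths `P` of length `h_G` in `G`. -/
def LSet (G : Dgraph) : Set Dgraph :=
  {D | ∃ (P : List ℕ) (h : P ≠ []), G.IsPath P ∧ P.length = G.height + 1 ∧
    D = pathGraph P h}

/-- The class `𝕽`: reflexive digraphs `R ∈ 𝔗ₐ` with
`𝓜^{𝓛(R)}(R,R) ∩ 𝓢(R,R) ≠ ∅`. -/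
def MemR (R : Dgraph) : Prop :=
  R.MemTa ∧ R.IsRefl ∧ (MLSet R R (LSet R) ∩ SHom R R).Nonempty

/-- `G` is a poset: reflexive, antisymmetric and transitive. -/
def IsPoset (G : Dgraph) : Prop :=
  G.IsRefl ∧ (∀ v w, (v, w) ∈ G.A → (w, v) ∈ G.A → v = w) ∧
    (∀ u v w, (u, v) ∈ G.A → (v, w) ∈ G.A → (u, w) ∈ G.A)

/-- The class `𝔗ₐ^{=n}`: digraphs in `𝔗ₐ` of height `n` in which every vertex
lies on a path of length `n`. -/
def MemTaEq (n : ℕ) (G : Dgraph) : Prop :=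
  G.MemTa ∧ G.height = n ∧ ∀ v ∈ G.V, ∃ p, G.IsPath p ∧ p.length = n + 1 ∧ v ∈ p

/-- A maximal path in `G`: no path in `G` properly contains its vertex set. -/
def MaximalPath (G : Dgraph) (P : List ℕ) : Prop :=
  G.IsPath P ∧ ∀ Q, G.IsPath Q → (∀ v ∈ P, v ∈ Q) → ∀ v ∈ Q, v ∈ P

end Dgraph

open Dgraph


section AmGmAux
open Finset

lemma log_lt_sub_one {x : ℝ} (hx : 0 < x) (hx1 : x ≠ 1) : Real.log x < x - 1 := by
  have h1 : x - 1 ≠ 0 := fun h => hx1 (by linarith)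
  have h2 : (x - 1) + 1 < Real.exp (x - 1) := Real.add_one_lt_exp h1
  have h3 : x < Real.exp (x - 1) := by linarith
  calc Real.log x < Real.log (Real.exp (x - 1)) := Real.log_lt_log hx h3
    _ = x - 1 := Real.log_exp _

lemma pow_eq_exp (c w : ℕ) (h : 0 < c ∨ w = 0) :
    ((c : ℝ)) ^ w = Real.exp ((w : ℝ) * Real.log c) := by
  rcases h with h | h
  · rw [Real.exp_nat_mul, Real.exp_log (by exact_mod_cast h)]
  · simp [h]

lemma amgm_strict {α : Type*} (T : Finset α) (c w : α → ℕ)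
    (hsum : ∑ p ∈ T, c p ≤ ∑ p ∈ T, w p) (hne : ∃ p ∈ T, c p ≠ w p) :
    ∏ p ∈ T, c p ^ w p < ∏ p ∈ T, w p ^ w p := by
  classical
  have hMpos : 0 < ∏ p ∈ T, w p ^ w p := by
    apply Finset.prod_pos
    intro p _
    rcases Nat.eq_zero_or_pos (w p) with h | h
    · simp [h]
    · exact pow_pos h _
  by_cases hz : ∃ p ∈ T, c p = 0 ∧ 0 < w p
  · obtain ⟨p, hp, hc0, hw0⟩ := hz
    have : ∏ p ∈ T, c p ^ w p = 0 :=
      Finset.prod_eq_zero hp (by simp [hc0, Nat.pos_iff_ne_zero.mp hw0])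
    rw [this]; exact hMpos
  · push_neg at hz
    have hpos : ∀ p ∈ T, 0 < c p ∨ w p = 0 := by
      intro p hp
      rcases Nat.eq_zero_or_pos (w p) with h | h
      · exact Or.inr h
      · exact Or.inl (Nat.pos_of_ne_zero (fun h0 => absurd h (by simp [hz p hp h0])))
    by_cases hkey : ∃ p ∈ T, w p ≠ 0 ∧ c p ≠ w p
    · -- real log argument
      obtain ⟨p₀, hp₀, hw₀, hc₀⟩ := hkey
      have key : ∀ p ∈ T, (w p : ℝ) * Real.log (c p) ≤ (w p : ℝ) * Real.log (w p) + ((c p : ℝ) - w p) := by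
        intro p hp
        rcases Nat.eq_zero_or_pos (w p) with h | h
        · simp [h]
        · have hc : 0 < c p := (hpos p hp).resolve_right (Nat.pos_iff_ne_zero.mp h)
          have hlog : Real.log ((c p : ℝ) / w p) ≤ (c p : ℝ) / w p - 1 :=
            Real.log_le_sub_one_of_pos (by positivity)
          rw [Real.log_div (by positivity) (by positivity)] at hlog
          have hwR : (0:ℝ) < w p := by exact_mod_cast h
          have := mul_le_mul_of_nonneg_left hlog (le_of_lt hwR)
          rw [mul_sub] at this
          have hdiv : (w p : ℝ) * ((c p : ℝ) / w p - 1) = (c p : ℝ) - w p := by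
            field_simp
          rw [hdiv] at this
          linarith
      have keystrict : (w p₀ : ℝ) * Real.log (c p₀) < (w p₀ : ℝ) * Real.log (w p₀) + ((c p₀ : ℝ) - w p₀) := by
        have h := Nat.pos_of_ne_zero hw₀
        have hc : 0 < c p₀ := (hpos p₀ hp₀).resolve_right hw₀
        have hratio : ((c p₀ : ℝ) / w p₀) ≠ 1 := by
          intro hcon
          apply hc₀
          have hwR : (0:ℝ) < w p₀ := by exact_mod_cast h
          field_simp at hcon
          exact_mod_cast hcon
        have hlog : Real.log ((c p₀ : ℝ) / w p₀) < (c p₀ : ℝ) / w p₀ - 1 :=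
          log_lt_sub_one (by positivity) hratio
        rw [Real.log_div (by positivity) (by positivity)] at hlog
        have hwR : (0:ℝ) < w p₀ := by exact_mod_cast h
        have := mul_lt_mul_of_pos_left hlog hwR
        rw [mul_sub] at this
        have hdiv : (w p₀ : ℝ) * ((c p₀ : ℝ) / w p₀ - 1) = (c p₀ : ℝ) - w p₀ := by
          field_simp
        rw [hdiv] at this
        linarith
      have hsumlt : ∑ p ∈ T, (w p : ℝ) * Real.log (c p)
          < ∑ p ∈ T, ((w p : ℝ) * Real.log (w p) + ((c p : ℝ) - w p)) :=
        Finset.sum_lt_sum key ⟨p₀, hp₀, keystrict⟩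
      have hsum2 : ∑ p ∈ T, ((w p : ℝ) * Real.log (w p) + ((c p : ℝ) - w p))
          ≤ ∑ p ∈ T, (w p : ℝ) * Real.log (w p) := by
        rw [Finset.sum_add_distrib]
        have : ∑ p ∈ T, ((c p : ℝ) - w p) ≤ 0 := by
          rw [Finset.sum_sub_distrib]
          have hc : ((∑ p ∈ T, c p : ℕ) : ℝ) ≤ ((∑ p ∈ T, w p : ℕ) : ℝ) := by exact_mod_cast hsum
          push_cast at hc
          linarith
        linarith
      have hlt : ∑ p ∈ T, (w p : ℝ) * Real.log (c p) < ∑ p ∈ T, (w p : ℝ) * Real.log (w p) :=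
        lt_of_lt_of_le hsumlt hsum2
      have hprodc : ((∏ p ∈ T, c p ^ w p : ℕ) : ℝ) = Real.exp (∑ p ∈ T, (w p : ℝ) * Real.log (c p)) := by
        rw [Real.exp_sum]
        push_cast
        exact Finset.prod_congr rfl (fun p hp => pow_eq_exp _ _ (hpos p hp))
      have hprodw : ((∏ p ∈ T, w p ^ w p : ℕ) : ℝ) = Real.exp (∑ p ∈ T, (w p : ℝ) * Real.log (w p)) := by
        rw [Real.exp_sum]
        push_cast
        refine Finset.prod_congr rfl (fun p hp => pow_eq_exp _ _ ?_)
        rcases Nat.eq_zero_or_pos (w p) with h | h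
        · exact Or.inr h
        · exact Or.inl h
      have : ((∏ p ∈ T, c p ^ w p : ℕ) : ℝ) < ((∏ p ∈ T, w p ^ w p : ℕ) : ℝ) := by
        rw [hprodc, hprodw]
        exact Real.exp_lt_exp.mpr hlt
      exact_mod_cast this
    · -- c = w on support of w, so some p with w p = 0, c p ≠ 0: contradict sum
      push_neg at hkey
      obtain ⟨p₀, hp₀, hne₀⟩ := hne
      have hw₀ : w p₀ = 0 := by
        by_contra h
        exact hne₀ (hkey p₀ hp₀ h)
      have hlt : ∑ p ∈ T, w p < ∑ p ∈ T, c p := by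
        apply Finset.sum_lt_sum
        · intro p hp
          by_cases h : w p = 0
          · simp [h]
          · rw [hkey p hp h]
        · exact ⟨p₀, hp₀, by rw [hw₀]; exact Nat.pos_of_ne_zero (by rw [hw₀] at hne₀; exact hne₀)⟩
      omega

lemma amgm_le {α : Type*} (T : Finset α) (c w : α → ℕ)
    (hsum : ∑ p ∈ T, c p ≤ ∑ p ∈ T, w p) :
    ∏ p ∈ T, c p ^ w p ≤ ∏ p ∈ T, w p ^ w p := by
  classical
  by_cases h : ∃ p ∈ T, c p ≠ w p
  · exact le_of_lt (amgm_strict T c w hsum h)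
  · push_neg at h
    exact le_of_eq (Finset.prod_congr rfl (fun p hp => by rw [h p hp]))

end AmGmAux

lemma growth (M C A B : ℕ) (hM : 1 ≤ M)
    (h : ∀ k, A * M ^ k ≤ B * M ^ k + C * (M - 1) ^ k) : A ≤ B := by
  by_contra hAB
  push_neg at hAB
  have key : ∀ k, M ^ k ≤ C * (M - 1) ^ k := by
    intro k
    have h1 := h k
    have h2 : (B + 1) * M ^ k ≤ A * M ^ k :=
      Nat.mul_le_mul_right _ hAB
    calc M ^ k = (B + 1) * M ^ k - B * M ^ k := by ring_nf; omega
      _ ≤ C * (M - 1) ^ k := by omega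
  rcases Nat.lt_or_ge M 2 with hM2 | hM2
  · have : M = 1 := by omega
    subst this
    have := key 1
    simp at this
  · -- M ≥ 2
    have hr : (1 : ℝ) < (M : ℝ) / ((M : ℝ) - 1) := by
      have h1 : (0 : ℝ) < (M : ℝ) - 1 := by
        have : (2:ℝ) ≤ (M:ℝ) := by exact_mod_cast hM2
        linarith
      rw [lt_div_iff₀ h1]
      linarith
    obtain ⟨k, hk⟩ := pow_unbounded_of_one_lt (C : ℝ) hr
    have hpow : ((M : ℝ) / ((M : ℝ) - 1)) ^ k = (M : ℝ) ^ k / ((M : ℝ) - 1) ^ k := div_pow _ _ _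
    have h1 : (0 : ℝ) < ((M : ℝ) - 1) ^ k := by
      have h2 : (2:ℝ) ≤ (M:ℝ) := by exact_mod_cast hM2
      have h3 : (0:ℝ) < (M:ℝ) - 1 := by linarith
      positivity
    rw [hpow, lt_div_iff₀ h1] at hk
    have hcast : ((M : ℝ) - 1) = ((M - 1 : ℕ) : ℝ) := by
      have : (1:ℝ) ≤ (M:ℝ) := by exact_mod_cast hM
      push_cast [Nat.cast_sub hM]
      ring
    rw [hcast] at hk
    have hk' : (C : ℝ) * ((M - 1 : ℕ) : ℝ) ^ k < (M : ℝ) ^ k := hk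
    have : C * (M - 1) ^ k < M ^ k := by exact_mod_cast hk'
    exact absurd (key k) (by omega)

namespace StmtAux
open Finset

/-- Base offset for fresh vertex labels. -/
def N0 (G : Dgraph) : ℕ := G.V.sup id + 1

/-- Fresh vertex labels. -/
def enc (G : Dgraph) (p : ℕ × ℕ) (i : ℕ) : ℕ := N0 G + Nat.pair (Nat.pair p.1 p.2) i

/-- Decoding the arc from a fresh label. -/
def dec (G : Dgraph) (z : ℕ) : ℕ × ℕ :=
  ((Nat.unpair (Nat.unpair (z - N0 G)).1).1, ((Nat.unpair (Nat.unpair (z - N0 G)).1).2))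

lemma dec_enc (G : Dgraph) (p : ℕ × ℕ) (i : ℕ) : dec G (enc G p i) = p := by
  simp [dec, enc, Nat.unpair_pair]

lemma enc_inj (G : Dgraph) {p q : ℕ × ℕ} {i j : ℕ} (h : enc G p i = enc G q j) :
    p = q ∧ i = j := by
  unfold enc at h
  have h2 : Nat.pair (Nat.pair p.1 p.2) i = Nat.pair (Nat.pair q.1 q.2) j := by omega
  rw [Nat.pair_eq_pair] at h2
  obtain ⟨h3, h4⟩ := h2
  rw [Nat.pair_eq_pair] at h3
  exact ⟨Prod.ext h3.1 h3.2, h4⟩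

lemma enc_not_mem (G : Dgraph) (p : ℕ × ℕ) (i : ℕ) : enc G p i ∉ G.V := by
  intro h
  have := Finset.le_sup (f := id) h
  simp only [id] at this
  unfold enc N0 at *
  omega

/-- The fresh vertices of the gadget. -/
def Zset (G : Dgraph) (BF : Finset (ℕ × ℕ)) (f : ℕ × ℕ → ℕ) : Finset ℕ :=
  BF.biUnion (fun p => (Finset.range (f p)).image (enc G p))

lemma Zset_disj (G : Dgraph) (BF : Finset (ℕ × ℕ)) (f : ℕ × ℕ → ℕ) :
    ∀ z ∈ Zset G BF f, z ∉ G.V := by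
  intro z hz
  simp only [Zset, Finset.mem_biUnion, Finset.mem_image, Finset.mem_range] at hz
  obtain ⟨p, _, i, _, rfl⟩ := hz
  exact enc_not_mem G p i

lemma mem_Zset (G : Dgraph) (BF : Finset (ℕ × ℕ)) (f : ℕ × ℕ → ℕ) (z : ℕ) :
    z ∈ Zset G BF f ↔ ∃ p ∈ BF, ∃ i < f p, z = enc G p i := by
  simp only [Zset, Finset.mem_biUnion, Finset.mem_image, Finset.mem_range]
  constructor
  · rintro ⟨p, hp, i, hi, rfl⟩; exact ⟨p, hp, i, hi, rfl⟩
  · rintro ⟨p, hp, i, hi, rfl⟩; exact ⟨p, hp, i, hi, rfl⟩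

/-- The gadget digraph: `G` plus, for each `p ∈ BF`, `f p` new vertices in the
interval of `p`. -/
def gadget (G : Dgraph) (BF : Finset (ℕ × ℕ)) (hBF : BF ⊆ G.A) (f : ℕ × ℕ → ℕ) : Dgraph where
  V := G.V ∪ Zset G BF f
  nonempty := by
    obtain ⟨v, hv⟩ := G.nonempty
    exact ⟨v, Finset.mem_union_left _ hv⟩
  A := G.A ∪ BF.biUnion (fun p =>
    ((Finset.range (f p)).image (fun i => (p.1, enc G p i))) ∪
    ((Finset.range (f p)).image (fun i => (enc G p i, p.2))))
  A_sub := by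
    intro q hq
    rcases Finset.mem_union.mp hq with h | h
    · have := G.A_sub q h
      exact ⟨Finset.mem_union_left _ this.1, Finset.mem_union_left _ this.2⟩
    · simp only [Finset.mem_biUnion, Finset.mem_union, Finset.mem_image,
        Finset.mem_range] at h
      obtain ⟨p, hp, h⟩ := h
      have hpV := G.A_sub p (hBF hp)
      have hzmem : ∀ i < f p, enc G p i ∈ Zset G BF f := by
        intro i hi
        rw [mem_Zset]
        exact ⟨p, hp, i, hi, rfl⟩
      rcases h with ⟨i, hi, rfl⟩ | ⟨i, hi, rfl⟩
      · exact ⟨Finset.mem_union_left _ hpV.1, Finset.mem_union_right _ (hzmem i hi)⟩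
      · exact ⟨Finset.mem_union_right _ (hzmem i hi), Finset.mem_union_left _ hpV.2⟩

end StmtAux

namespace StmtAux
open Finset Dgraph

lemma pi_set_spec (Z : Finset ℕ) (c : ℕ → Finset ℕ) (d : ℕ → ℕ) :
    {g : ℕ → ℕ | (∀ z ∈ Z, g z ∈ c z) ∧ ∀ x ∉ Z, g x = d x}.Finite ∧
    {g : ℕ → ℕ | (∀ z ∈ Z, g z ∈ c z) ∧ ∀ x ∉ Z, g x = d x}.ncard
      = ∏ z ∈ Z, (c z).card := by
  classical
  set F : (∀ a ∈ Z, ℕ) → (ℕ → ℕ) := fun t x => if h : x ∈ Z then t x h else d x with hF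
  have hset : {g : ℕ → ℕ | (∀ z ∈ Z, g z ∈ c z) ∧ ∀ x ∉ Z, g x = d x}
      = F '' ↑(Z.pi fun z => c z) := by
    ext g
    constructor
    · rintro ⟨h1, h2⟩
      refine ⟨fun x _ => g x, ?_, ?_⟩
      · rw [Finset.mem_coe, Finset.mem_pi]
        intro x hx
        exact h1 x hx
      · funext x
        by_cases hx : x ∈ Z
        · simp [hF, hx]
        · simp [hF, hx, h2 x hx]
    · rintro ⟨t, ht, rfl⟩
      rw [Finset.mem_coe, Finset.mem_pi] at ht
      constructor
      · intro z hz; simp only [hF, dif_pos hz]; exact ht z hz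
      · intro x hx; simp [hF, hx]
  have hinj : Set.InjOn F ↑(Z.pi fun z => c z) := by
    intro t _ t' _ h
    funext x hx
    have := congrFun h x
    simpa [hF, hx] using this
  constructor
  · rw [hset]; exact ((Z.pi fun z => c z).finite_toSet).image F
  · rw [hset, Set.ncard_image_of_injOn hinj, Set.ncard_coe_finset, Finset.card_pi]

lemma finite_hom (G H : Dgraph) : (Hom G H).Finite := by
  apply Set.Finite.subset
    (pi_set_spec G.V (fun _ => H.V) (fun _ => 0)).1
  intro g hg
  exact ⟨fun v hv => hg.1 v hv, fun x hx => hg.2.2 x hx⟩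

/-- Restriction of a gadget homomorphism is a homomorphism of `G`. -/
lemma gadget_restrict (G H : Dgraph) (BF : Finset (ℕ × ℕ)) (hBF : BF ⊆ G.A)
    (f : ℕ × ℕ → ℕ) (g : ℕ → ℕ) (hg : g ∈ Hom (gadget G BF hBF f) H) :
    Dgraph.restrict G.V g ∈ Hom G H := by
  obtain ⟨hg1, hg2, hg3⟩ := hg
  refine ⟨?_, ?_, ?_⟩
  · intro v hv
    rw [Dgraph.restrict, if_pos hv]
    exact hg1 v (Finset.mem_union_left _ hv)
  · intro p hp
    have h1 := (G.A_sub p hp).1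
    have h2 := (G.A_sub p hp).2
    simp only [Dgraph.restrict, if_pos h1, if_pos h2]
    exact hg2 p (Finset.mem_union_left _ hp)
  · intro v hv
    rw [Dgraph.restrict, if_neg hv]

/-- The fibers of the restriction map. -/
lemma gadget_fiber (G H : Dgraph) (BF : Finset (ℕ × ℕ)) (hBF : BF ⊆ G.A)
    (f : ℕ × ℕ → ℕ) (ζ : ℕ → ℕ) (hζ : ζ ∈ Hom G H) :
    {g : ℕ → ℕ | g ∈ Hom (gadget G BF hBF f) H ∧ Dgraph.restrict G.V g = ζ}
      = {g : ℕ → ℕ | (∀ z ∈ Zset G BF f,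
            g z ∈ H.interval (ζ (dec G z).1) (ζ (dec G z).2)) ∧
          ∀ x ∉ Zset G BF f, g x = ζ x} := by
  classical
  ext g
  constructor
  · rintro ⟨⟨hg1, hg2, hg3⟩, hres⟩
    constructor
    · intro z hz
      rw [mem_Zset] at hz
      obtain ⟨p, hp, i, hi, rfl⟩ := hz
      have hp1 : p.1 ∈ G.V := (G.A_sub p (hBF hp)).1
      have hp2 : p.2 ∈ G.V := (G.A_sub p (hBF hp)).2
      have harc1 : (p.1, enc G p i) ∈ (gadget G BF hBF f).A := by
        apply Finset.mem_union_right
        rw [Finset.mem_biUnion]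
        refine ⟨p, hp, ?_⟩
        apply Finset.mem_union_left
        rw [Finset.mem_image]
        exact ⟨i, Finset.mem_range.mpr hi, rfl⟩
      have harc2 : (enc G p i, p.2) ∈ (gadget G BF hBF f).A := by
        apply Finset.mem_union_right
        rw [Finset.mem_biUnion]
        refine ⟨p, hp, ?_⟩
        apply Finset.mem_union_right
        rw [Finset.mem_image]
        exact ⟨i, Finset.mem_range.mpr hi, rfl⟩
      have h1 := hg2 _ harc1
      have h2 := hg2 _ harc2
      have hgp1 : g p.1 = ζ p.1 := by rw [← hres, Dgraph.restrict, if_pos hp1]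
      have hgp2 : g p.2 = ζ p.2 := by rw [← hres, Dgraph.restrict, if_pos hp2]
      have hzV : g (enc G p i) ∈ H.V := by
        apply hg1
        apply Finset.mem_union_right
        rw [mem_Zset]
        exact ⟨p, hp, i, hi, rfl⟩
      rw [dec_enc]
      rw [interval, Finset.mem_filter]
      exact ⟨hzV, by rw [← hgp1]; exact h1, by rw [← hgp2]; exact h2⟩
    · intro x hx
      by_cases hxG : x ∈ G.V
      · rw [← hres, Dgraph.restrict, if_pos hxG]
      · have : x ∉ (gadget G BF hBF f).V := by
          simp only [gadget, Finset.mem_union]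
          push_neg
          exact ⟨hxG, hx⟩
        rw [hg3 x this, ← hres, Dgraph.restrict, if_neg hxG]
  · rintro ⟨h1, h2⟩
    have hζ3 := hζ.2.2
    have hGnotZ : ∀ v ∈ G.V, v ∉ Zset G BF f := fun v hv hz => Zset_disj G BF f v hz hv
    have hgG : ∀ v ∈ G.V, g v = ζ v := fun v hv => h2 v (hGnotZ v hv)
    refine ⟨⟨?_, ?_, ?_⟩, ?_⟩
    · intro v hv
      rcases Finset.mem_union.mp hv with hv | hv
      · rw [hgG v hv]; exact hζ.1 v hv
      · have := h1 v hv
        rw [interval, Finset.mem_filter] at this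
        exact this.1
    · intro q hq
      rcases Finset.mem_union.mp hq with hq | hq
      · rw [hgG q.1 (G.A_sub q hq).1, hgG q.2 (G.A_sub q hq).2]
        exact hζ.2.1 q hq
      · simp only [Finset.mem_biUnion, Finset.mem_union, Finset.mem_image,
          Finset.mem_range] at hq
        obtain ⟨p, hp, hq⟩ := hq
        have hp1 : p.1 ∈ G.V := (G.A_sub p (hBF hp)).1
        have hp2 : p.2 ∈ G.V := (G.A_sub p (hBF hp)).2
        rcases hq with ⟨i, hi, rfl⟩ | ⟨i, hi, rfl⟩
        · have hz : enc G p i ∈ Zset G BF f := by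
            rw [mem_Zset]; exact ⟨p, hp, i, hi, rfl⟩
          have := h1 _ hz
          rw [dec_enc, interval, Finset.mem_filter] at this
          show (g p.1, g (enc G p i)) ∈ H.A
          rw [hgG p.1 hp1]
          exact this.2.1
        · have hz : enc G p i ∈ Zset G BF f := by
            rw [mem_Zset]; exact ⟨p, hp, i, hi, rfl⟩
          have := h1 _ hz
          rw [dec_enc, interval, Finset.mem_filter] at this
          show (g (enc G p i), g p.2) ∈ H.A
          rw [hgG p.2 hp2]
          exact this.2.2
    · intro v hv
      simp only [gadget, Finset.mem_union] at hv
      push_neg at hv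
      rw [h2 v hv.2]
      exact hζ3 v hv.1
    · funext x
      by_cases hx : x ∈ G.V
      · rw [Dgraph.restrict, if_pos hx, hgG x hx]
      · rw [Dgraph.restrict, if_neg hx, eq_comm]
        exact hζ3 x hx

/-- Product over the gadget vertices. -/
lemma Zset_prod (G : Dgraph) (BF : Finset (ℕ × ℕ)) (f : ℕ × ℕ → ℕ) (F : ℕ × ℕ → ℕ) :
    ∏ z ∈ Zset G BF f, F (dec G z) = ∏ p ∈ BF, F p ^ f p := by
  classical
  rw [Zset, Finset.prod_biUnion]
  · apply Finset.prod_congr rfl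
    intro p _
    rw [Finset.prod_image]
    · simp only [dec_enc]
      rw [Finset.prod_const, Finset.card_range]
    · intro i _ j _ h
      exact (enc_inj G h).2
  · intro p _ q _ hpq
    simp only [Function.onFun, Finset.disjoint_left]
    intro z hz1 hz2
    simp only [Finset.mem_image, Finset.mem_range] at hz1 hz2
    obtain ⟨i, _, rfl⟩ := hz1
    obtain ⟨j, _, h⟩ := hz2
    exact hpq ((enc_inj G h).1.symm ▸ rfl)

/-- The number of homomorphisms from the gadget. -/
lemma gadget_hom_card (G H : Dgraph) (BF : Finset (ℕ × ℕ)) (hBF : BF ⊆ G.A)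
    (f : ℕ × ℕ → ℕ) :
    (Hom (gadget G BF hBF f) H).ncard
      = ∑ ζ ∈ (finite_hom G H).toFinset, ∏ p ∈ BF, (H.iota (ζ p.1) (ζ p.2)) ^ f p := by
  classical
  set Gk := gadget G BF hBF f with hGk
  have hfin : (Hom Gk H).Finite := finite_hom Gk H
  rw [Set.ncard_eq_toFinset_card _ hfin]
  have hmap : ∀ g ∈ hfin.toFinset, Dgraph.restrict G.V g ∈ (finite_hom G H).toFinset := by
    intro g hg
    rw [Set.Finite.mem_toFinset] at hg ⊢
    exact gadget_restrict G H BF hBF f g hg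
  rw [Finset.card_eq_sum_card_fiberwise hmap]
  apply Finset.sum_congr rfl
  intro ζ hζmem
  rw [Set.Finite.mem_toFinset] at hζmem
  have hcoe : ↑(hfin.toFinset.filter (fun g => Dgraph.restrict G.V g = ζ))
      = {g : ℕ → ℕ | (∀ z ∈ Zset G BF f,
            g z ∈ H.interval (ζ (dec G z).1) (ζ (dec G z).2)) ∧
          ∀ x ∉ Zset G BF f, g x = ζ x} := by
    rw [← gadget_fiber G H BF hBF f ζ hζmem]
    ext g
    simp only [Finset.coe_filter, Set.Finite.mem_toFinset, Set.mem_setOf_eq]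
    exact Iff.rfl
  have hcard := (pi_set_spec (Zset G BF f)
      (fun z => H.interval (ζ (dec G z).1) (ζ (dec G z).2)) ζ).2
  calc (hfin.toFinset.filter (fun g => Dgraph.restrict G.V g = ζ)).card
      = (↑(hfin.toFinset.filter (fun g => Dgraph.restrict G.V g = ζ)) : Set (ℕ → ℕ)).ncard := by
        rw [Set.ncard_coe_finset]
    _ = ∏ z ∈ Zset G BF f, (H.interval (ζ (dec G z).1) (ζ (dec G z).2)).card := by
        rw [hcoe, hcard]
    _ = ∏ z ∈ Zset G BF f, H.iota (ζ (dec G z).1) (ζ (dec G z).2) := rfl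
    _ = ∏ p ∈ BF, (H.iota (ζ p.1) (ζ p.2)) ^ f p :=
        Zset_prod G BF f (fun p => H.iota (ζ p.1) (ζ p.2))

end StmtAux

namespace StmtAux
open Dgraph

lemma restrict_hom (L G H : Dgraph) (hLG : Subgraph L G) (g : ℕ → ℕ)
    (hg : g ∈ Hom G H) : Dgraph.restrict L.V g ∈ Hom L H := by
  refine ⟨?_, ?_, ?_⟩
  · intro v hv
    rw [Dgraph.restrict, if_pos hv]
    exact hg.1 v (hLG.1 hv)
  · intro p hp
    have h1 := (L.A_sub p hp).1
    have h2 := (L.A_sub p hp).2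
    simp only [Dgraph.restrict, if_pos h1, if_pos h2]
    exact hg.2.1 p (hLG.2 hp)
  · intro v hv
    rw [Dgraph.restrict, if_neg hv]

lemma mu_restrict (L H : Dgraph) (g : ℕ → ℕ) :
    mu L H (Dgraph.restrict L.V g) = ∑ p ∈ L.Astar, H.iota (g p.1) (g p.2) := by
  apply Finset.sum_congr rfl
  intro p hp
  have hp' : p ∈ L.A := Finset.mem_of_mem_filter p hp
  have h1 := (L.A_sub p hp').1
  have h2 := (L.A_sub p hp').2
  simp only [Dgraph.restrict, if_pos h1, if_pos h2]

lemma jset_finite (G H H' : Dgraph) (𝓛 : Set Dgraph) (ξ : ℕ → ℕ) :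
    (JSet G H H' 𝓛 ξ).Finite :=
  Set.Finite.subset (finite_hom G H') (fun _ h => h.1)

end StmtAux


open StmtAux in
theorem stmt_5 (R S : Dgraph) (hRr : R.IsRefl) (hSr : S.IsRefl)
    (hHom : ∀ G' : Dgraph, (Hom G' R).ncard ≤ (Hom G' S).ncard)
    (G : Dgraph) (𝓛 : Set Dgraph) (h𝓛 : ∀ L ∈ 𝓛, Subgraph L G)
    (ξ : ℕ → ℕ) (hξ : ξ ∈ MLSet G R 𝓛)
    (hI : ∃ ζ ∈ MLSet G S 𝓛, ∀ L ∈ 𝓛, ∀ p ∈ L.Astar,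
      S.iota (ζ p.1) (ζ p.2) = R.iota (ξ p.1) (ξ p.2)) :
    (JSet G R R 𝓛 ξ).ncard ≤ (JSet G R S 𝓛 ξ).ncard := by
  classical
  obtain ⟨ζS, hζSM, hζSI⟩ := hI
  set w : ℕ × ℕ → ℕ := fun p => R.iota (ξ p.1) (ξ p.2) with hw
  set 𝒯 : Finset (Finset (ℕ × ℕ)) :=
    G.Astar.powerset.filter (fun T => ∃ L ∈ 𝓛, L.Astar = T) with h𝒯
  have hT : ∀ L ∈ 𝓛, L.Astar ∈ 𝒯 := by
    intro L hL
    rw [h𝒯, Finset.mem_filter, Finset.mem_powerset]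
    refine ⟨?_, L, hL, rfl⟩
    intro p hp
    rw [Astar, Finset.mem_filter] at hp ⊢
    exact ⟨(h𝓛 L hL).2 hp.1, hp.2⟩
  have hTmem : ∀ T ∈ 𝒯, ∃ L ∈ 𝓛, L.Astar = T := by
    intro T hT'
    rw [h𝒯, Finset.mem_filter] at hT'
    exact hT'.2
  set BF : Finset (ℕ × ℕ) := 𝒯.sup id with hBF
  have hTsubBF : ∀ T ∈ 𝒯, T ⊆ BF := by
    intro T hT'
    exact Finset.le_sup (f := id) hT'
  have hBFsub : BF ⊆ G.A := by
    intro p hp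
    rw [hBF, Finset.mem_sup] at hp
    obtain ⟨T, hT', hpT⟩ := hp
    rw [h𝒯, Finset.mem_filter, Finset.mem_powerset] at hT'
    have := hT'.1 hpT
    exact Finset.mem_of_mem_filter p this
  set m : Finset (ℕ × ℕ) → ℕ := fun T => ∏ p ∈ T, w p ^ w p with hm
  set M : ℕ := ∏ T ∈ 𝒯, m T with hM
  have hm1 : ∀ T, 1 ≤ m T := by
    intro T
    apply Finset.one_le_prod'
    intro p _
    rcases Nat.eq_zero_or_pos (w p) with h | h
    · simp [h]
    · exact Nat.one_le_iff_ne_zero.mpr (pow_ne_zero _ (Nat.pos_iff_ne_zero.mp h))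
  have hM1 : 1 ≤ M := Finset.one_le_prod' (fun T _ => hm1 T)
  -- the maximality constraints
  have hconR : ∀ ζ' ∈ Hom G R, ∀ T ∈ 𝒯,
      ∑ p ∈ T, R.iota (ζ' p.1) (ζ' p.2) ≤ ∑ p ∈ T, w p := by
    intro ζ' hζ' T hT'
    obtain ⟨L, hL, rfl⟩ := hTmem T hT'
    have h1 : Dgraph.restrict L.V ζ' ∈ Hom L R := restrict_hom L G R (h𝓛 L hL) ζ' hζ'
    have h2 := (hξ.2 L hL).2 _ h1
    rw [mu_restrict, mu_restrict] at h2
    exact h2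
  have hconS : ∀ ζ' ∈ Hom G S, ∀ T ∈ 𝒯,
      ∑ p ∈ T, S.iota (ζ' p.1) (ζ' p.2) ≤ ∑ p ∈ T, w p := by
    intro ζ' hζ' T hT'
    obtain ⟨L, hL, rfl⟩ := hTmem T hT'
    have h1 : Dgraph.restrict L.V ζ' ∈ Hom L S := restrict_hom L G S (h𝓛 L hL) ζ' hζ'
    have h2 := (hζSM.2 L hL).2 _ h1
    rw [mu_restrict, mu_restrict] at h2
    calc ∑ p ∈ L.Astar, S.iota (ζ' p.1) (ζ' p.2)
        ≤ ∑ p ∈ L.Astar, S.iota (ζS p.1) (ζS p.2) := h2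
      _ = ∑ p ∈ L.Astar, w p :=
          Finset.sum_congr rfl (fun p hp => hζSI L hL p hp)
  -- AM-GM bounds on the profile products
  have hPsi_le : ∀ ι' : ℕ × ℕ → ℕ, (∀ T ∈ 𝒯, ∑ p ∈ T, ι' p ≤ ∑ p ∈ T, w p) →
      ∏ T ∈ 𝒯, ∏ p ∈ T, ι' p ^ w p ≤ M := by
    intro ι' hcon
    rw [hM]
    exact Finset.prod_le_prod' (fun T hT' => amgm_le T ι' w (hcon T hT'))
  have hPsi_lt : ∀ ι' : ℕ × ℕ → ℕ, (∀ T ∈ 𝒯, ∑ p ∈ T, ι' p ≤ ∑ p ∈ T, w p) →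
      (∃ T₀ ∈ 𝒯, ∃ p ∈ T₀, ι' p ≠ w p) →
      ∏ T ∈ 𝒯, ∏ p ∈ T, ι' p ^ w p ≤ M - 1 := by
    intro ι' hcon ⟨T₀, hT₀, hp₀⟩
    have hlt : ∏ T ∈ 𝒯, ∏ p ∈ T, ι' p ^ w p < M := by
      rw [hM, ← Finset.mul_prod_erase 𝒯 m hT₀,
        ← Finset.mul_prod_erase 𝒯 (fun T => ∏ p ∈ T, ι' p ^ w p) hT₀]
      apply Nat.mul_lt_mul_of_lt_of_le
      · exact amgm_strict T₀ ι' w (hcon T₀ hT₀) hp₀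
      · exact Finset.prod_le_prod' (fun T hT' =>
          amgm_le T ι' w (hcon T (Finset.mem_of_mem_erase hT')))
      · exact Nat.lt_of_lt_of_le Nat.zero_lt_one
          (Finset.one_le_prod' (fun T _ => hm1 T))
    omega
  -- the exponents
  set e : ℕ × ℕ → ℕ := fun p => ∑ T ∈ 𝒯, if p ∈ T then w p else 0 with he
  have hident : ∀ (k : ℕ) (x : ℕ × ℕ → ℕ),
      ∏ p ∈ BF, x p ^ (k * e p) = (∏ T ∈ 𝒯, ∏ p ∈ T, x p ^ w p) ^ k := by
    intro k x
    have h1 : ∀ p, x p ^ (k * e p) = (x p ^ e p) ^ k := by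
      intro p
      rw [mul_comm, pow_mul]
    simp only [h1]
    rw [Finset.prod_pow]
    congr 1
    have h2 : ∀ p ∈ BF, x p ^ e p = ∏ T ∈ 𝒯, x p ^ (if p ∈ T then w p else 0) := by
      intro p _
      rw [he, Finset.prod_pow_eq_pow_sum]
    rw [Finset.prod_congr rfl h2, Finset.prod_comm]
    apply Finset.prod_congr rfl
    intro T hT'
    rw [← Finset.prod_subset (hTsubBF T hT')
      (f := fun p => x p ^ (if p ∈ T then w p else 0))
      (fun p _ hp => by simp only [if_neg hp, pow_zero])]
    exact Finset.prod_congr rfl (fun p hp => by simp only [if_pos hp])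
  -- finite versions of the sets involved
  set HRfin := (finite_hom G R).toFinset with hHRfin
  set HSfin := (finite_hom G S).toFinset with hHSfin
  set JRfin := (jset_finite G R R 𝓛 ξ).toFinset with hJRfin
  set JSfin := (jset_finite G R S 𝓛 ξ).toFinset with hJSfin
  have hJRsub : JRfin ⊆ HRfin := by
    intro ζ hζ'
    rw [hJRfin, Set.Finite.mem_toFinset] at hζ'
    rw [hHRfin, Set.Finite.mem_toFinset]
    exact hζ'.1
  -- the key inequality for every k
  have key : ∀ k : ℕ, JRfin.card * M ^ k ≤ JSfin.card * M ^ k + HSfin.card * (M - 1) ^ k := by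
    intro k
    set Gk := gadget G BF hBFsub (fun p => k * e p) with hGkdef
    -- lower bound for R
    have hlowR : JRfin.card * M ^ k ≤ (Hom Gk R).ncard := by
      rw [gadget_hom_card G R BF hBFsub (fun p => k * e p)]
      have hterm : ∀ ζ ∈ JRfin, ∏ p ∈ BF, (R.iota (ζ p.1) (ζ p.2)) ^ (k * e p) = M ^ k := by
        intro ζ hζ'
        rw [hJRfin, Set.Finite.mem_toFinset] at hζ'
        have hprof : ∀ p ∈ BF, R.iota (ζ p.1) (ζ p.2) = w p := by
          intro p hp
          rw [hBF, Finset.mem_sup] at hp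
          obtain ⟨T, hT', hpT⟩ := hp
          obtain ⟨L, hL, rfl⟩ := hTmem T hT'
          exact hζ'.2 L hL p hpT
        rw [Finset.prod_congr rfl (fun p hp => by rw [hprof p hp]), hident k w, hM]
      calc JRfin.card * M ^ k
          = ∑ _ζ ∈ JRfin, M ^ k := by rw [Finset.sum_const, smul_eq_mul]
        _ = ∑ ζ ∈ JRfin, ∏ p ∈ BF, (R.iota (ζ p.1) (ζ p.2)) ^ (k * e p) :=
            (Finset.sum_congr rfl hterm).symm
        _ ≤ ∑ ζ ∈ HRfin, ∏ p ∈ BF, (R.iota (ζ p.1) (ζ p.2)) ^ (k * e p) :=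
            Finset.sum_le_sum_of_subset hJRsub
    -- upper bound for S
    have hupS : (Hom Gk S).ncard ≤ JSfin.card * M ^ k + HSfin.card * (M - 1) ^ k := by
      rw [gadget_hom_card G S BF hBFsub (fun p => k * e p)]
      have hterm : ∀ ζ ∈ HSfin, ∏ p ∈ BF, (S.iota (ζ p.1) (ζ p.2)) ^ (k * e p)
          ≤ if ζ ∈ JSfin then M ^ k else (M - 1) ^ k := by
        intro ζ hζ'
        rw [hHSfin, Set.Finite.mem_toFinset] at hζ'
        rw [hident k (fun p => S.iota (ζ p.1) (ζ p.2))]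
        have hcon := fun T hT' => hconS ζ hζ' T hT'
        by_cases hJ : ζ ∈ JSfin
        · rw [if_pos hJ]
          exact Nat.pow_le_pow_left (hPsi_le _ hcon) k
        · rw [if_neg hJ]
          apply Nat.pow_le_pow_left
          apply hPsi_lt _ hcon
          rw [hJSfin, Set.Finite.mem_toFinset] at hJ
          have : ¬ (∀ L ∈ 𝓛, ∀ p ∈ L.Astar,
              S.iota (ζ p.1) (ζ p.2) = R.iota (ξ p.1) (ξ p.2)) := by
            intro hcontra
            exact hJ ⟨hζ', hcontra⟩
          push_neg at this
          obtain ⟨L, hL, p, hp, hne⟩ := this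
          exact ⟨L.Astar, hT L hL, p, hp, hne⟩
      calc ∑ ζ ∈ HSfin, ∏ p ∈ BF, (S.iota (ζ p.1) (ζ p.2)) ^ (k * e p)
          ≤ ∑ ζ ∈ HSfin, (if ζ ∈ JSfin then M ^ k else (M - 1) ^ k) :=
            Finset.sum_le_sum hterm
        _ = (HSfin.filter (fun ζ => ζ ∈ JSfin)).card * M ^ k
            + (HSfin.filter (fun ζ => ζ ∉ JSfin)).card * (M - 1) ^ k := by
            rw [Finset.sum_ite, Finset.sum_const, Finset.sum_const, smul_eq_mul, smul_eq_mul]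
        _ ≤ JSfin.card * M ^ k + HSfin.card * (M - 1) ^ k := by
            apply Nat.add_le_add
            · apply Nat.mul_le_mul_right
              apply Finset.card_le_card
              intro ζ hζ'
              exact (Finset.mem_filter.mp hζ').2
            · apply Nat.mul_le_mul_right
              exact Finset.card_le_card (Finset.filter_subset _ _)
    calc JRfin.card * M ^ k ≤ (Hom Gk R).ncard := hlowR
      _ ≤ (Hom Gk S).ncard := hHom Gk
      _ ≤ JSfin.card * M ^ k + HSfin.card * (M - 1) ^ k := hupS
  have hfinal : JRfin.card ≤ JSfin.card := growth M HSfin.card _ _ hM1 key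
  rw [Set.ncard_eq_toFinset_card _ (jset_finite G R R 𝓛 ξ),
    Set.ncard_eq_toFinset_card _ (jset_finite G R S 𝓛 ξ)]
  exact hfinal
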